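/- Let N, k ∈ ℕ with N ≥ 2, let Ω ⊆ ℝᴺ be open, let c₁,…,c_k ∈ ℝ, and let f₁,…,f_k : ℝᴺ → ℝ be C¹ on Ω. Fix x₀ ∈ Ω and define, for 0 < r < dist(x₀, ∂Ω), H(r) := r^{1−N} ∫_{∂B_r(x₀)} ∑_{i=1}^k c_i f_i² dσ. Then H is differentiable on (0, dist(x₀,∂Ω)) with H'(r) = (2 / r^{N−1}) ∫_{∂B_r(x₀)} ∑_{i=1}^k c_i f_i ∂_n f_i dσ. -/

import Mathlib

open MeasureTheory Metric Set Bornology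
open scoped RealInnerProductSpace ENNReal NNReal

noncomputable def radDeriv {N : ℕ} (x₀ : EuclideanSpace ℝ (Fin N)) (r : ℝ)
    (f : EuclideanSpace ℝ (Fin N) → ℝ) (x : EuclideanSpace ℝ (Fin N)) : ℝ :=
  ⟪gradient f x, x - x₀⟫ / r

section Aux

variable {E : Type*} [NormedAddCommGroup E] [NormedSpace ℝ E]

/-- Radial projection is Lipschitz outside the unit ball. -/
lemma proj_lipschitzOn :
    LipschitzOnWith 2 (fun x : E => ‖x‖⁻¹ • x) {x : E | 1 ≤ ‖x‖} := by
  rw [lipschitzOnWith_iff_dist_le_mul]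
  intro x hx y hy
  have hx1 : (1:ℝ) ≤ ‖x‖ := hx
  have hy1 : (1:ℝ) ≤ ‖y‖ := hy
  have hx0 : (0:ℝ) < ‖x‖ := lt_of_lt_of_le one_pos hx1
  have hy0 : (0:ℝ) < ‖y‖ := lt_of_lt_of_le one_pos hy1
  rw [dist_eq_norm, dist_eq_norm]
  have key : ‖x‖⁻¹ • x - ‖y‖⁻¹ • y
      = ‖x‖⁻¹ • (x - y) + (‖x‖⁻¹ - ‖y‖⁻¹) • y := by
    rw [smul_sub, sub_smul]; abel
  rw [key]
  have h1 : ‖‖x‖⁻¹ • (x - y)‖ ≤ ‖x - y‖ := by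
    rw [norm_smul, norm_inv, norm_norm]
    calc ‖x‖⁻¹ * ‖x - y‖ ≤ 1 * ‖x - y‖ := by
          apply mul_le_mul_of_nonneg_right _ (norm_nonneg _)
          rw [inv_le_one_iff₀]; right; exact hx1
      _ = ‖x - y‖ := one_mul _
  have h2 : ‖(‖x‖⁻¹ - ‖y‖⁻¹) • y‖ ≤ ‖x - y‖ := by
    rw [norm_smul, norm_sub_rev x y]
    have hne : ‖x‖⁻¹ - ‖y‖⁻¹ = (‖y‖ - ‖x‖) / (‖x‖ * ‖y‖) := by
      field_simp
    have hnn : |‖y‖ - ‖x‖| ≤ ‖y - x‖ := abs_norm_sub_norm_le y x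
    rw [Real.norm_eq_abs, hne, abs_div, abs_of_pos (mul_pos hx0 hy0)]
    calc |‖y‖ - ‖x‖| / (‖x‖ * ‖y‖) * ‖y‖
        = |‖y‖ - ‖x‖| / ‖x‖ := by field_simp
      _ ≤ ‖y - x‖ / ‖x‖ := by gcongr
      _ ≤ ‖y - x‖ / 1 := by gcongr
      _ = ‖y - x‖ := div_one _
  calc ‖‖x‖⁻¹ • (x - y) + (‖x‖⁻¹ - ‖y‖⁻¹) • y‖
      ≤ ‖‖x‖⁻¹ • (x - y)‖ + ‖(‖x‖⁻¹ - ‖y‖⁻¹) • y‖ := norm_add_le _ _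
    _ ≤ ‖x - y‖ + ‖x - y‖ := add_le_add h1 h2
    _ = 2 * ‖x - y‖ := by ring

end Aux

section Finiteness

lemma coord_le_norm {n : ℕ} (x : EuclideanSpace ℝ (Fin n)) (i : Fin n) : |x i| ≤ ‖x‖ := by
  rw [EuclideanSpace.norm_eq, ← Real.sqrt_sq_eq_abs]
  apply Real.sqrt_le_sqrt
  have : x i ^ 2 = ‖x i‖ ^ 2 := by rw [Real.norm_eq_abs, sq_abs]
  rw [this]
  exact Finset.single_le_sum (f := fun j => ‖x j‖ ^ 2)
    (fun j _ => sq_nonneg _) (Finset.mem_univ i)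

lemma bounded_hausdorff_lt_top {m : ℕ} {s : Set (EuclideanSpace ℝ (Fin m))}
    (hs : IsBounded s) : μH[(m : ℝ)] s < ⊤ := by
  have hd : (0:ℝ) ≤ m := Nat.cast_nonneg m
  have ha := PiLp.antilipschitzWith_ofLp 2 (fun _ : Fin m => ℝ)
  have h1 := ha.le_hausdorffMeasure_image hd s
  have hvol : (μH[(m:ℝ)] : Measure (Fin m → ℝ)) = volume := by
    have := hausdorffMeasure_pi_real (ι := Fin m)
    simpa using this
  have h2 : μH[(m:ℝ)] (WithLp.ofLp '' s) < ⊤ := by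
    rw [hvol]
    exact ((PiLp.lipschitzWith_ofLp 2 (fun _ : Fin m => ℝ)).isBounded_image hs).measure_lt_top
  refine h1.trans_lt (ENNReal.mul_lt_top ?_ h2)
  exact ENNReal.rpow_lt_top_of_nonneg hd ENNReal.coe_ne_top

variable {m : ℕ}

/-- A face of the cube, as a subset of Euclidean space. -/
def cubeFace (j : Fin (m + 1)) (ε : ℝ) : Set (EuclideanSpace ℝ (Fin (m + 1))) :=
  {x | x j = ε ∧ ∀ i, |x i| ≤ 1}

lemma cubeFace_hausdorff_lt_top (j : Fin (m + 1)) (ε : ℝ) :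
    μH[(m : ℝ)] (cubeFace j ε) < ⊤ := by
  have hd : (0:ℝ) ≤ m := Nat.cast_nonneg m
  set φ : EuclideanSpace ℝ (Fin m) → EuclideanSpace ℝ (Fin (m + 1)) :=
    fun y => WithLp.toLp 2 (j.insertNth ε (fun i => y i) : Fin (m + 1) → ℝ) with hφ
  have hiso : Isometry φ := by
    apply Isometry.of_dist_eq
    intro y z
    rw [EuclideanSpace.dist_eq, EuclideanSpace.dist_eq]
    congr 1
    rw [Fin.sum_univ_succAbove (fun i => dist ((φ y) i) ((φ z) i) ^ 2) j]
    simp [hφ, Fin.insertNth_apply_same, Fin.insertNth_apply_succAbove]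
  have hsub : cubeFace j ε ⊆ φ '' (closedBall 0 (m + 1)) := by
    rintro x ⟨hxj, hxb⟩
    refine ⟨WithLp.toLp 2 (fun i => x (j.succAbove i) : Fin m → ℝ), ?_, ?_⟩
    · rw [mem_closedBall, dist_zero_right, EuclideanSpace.norm_eq]
      have hsum : ∑ i : Fin m, ‖x (j.succAbove i)‖ ^ 2 ≤ (m : ℝ) := by
        calc ∑ i : Fin m, ‖x (j.succAbove i)‖ ^ 2 ≤ ∑ _i : Fin m, (1:ℝ) := by
              apply Finset.sum_le_sum
              intro i _
              have := hxb (j.succAbove i)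
              rw [Real.norm_eq_abs]
              nlinarith [abs_nonneg (x (j.succAbove i))]
          _ = (m : ℝ) := by simp
      have h1 : (0:ℝ) ≤ (m:ℝ) + 1 := by positivity
      calc √(∑ i : Fin m, ‖x (j.succAbove i)‖ ^ 2) ≤ √(((m:ℝ)+1)^2) := by
            apply Real.sqrt_le_sqrt
            nlinarith [Nat.cast_nonneg (α := ℝ) m]
        _ = (m:ℝ) + 1 := Real.sqrt_sq h1
    · rw [hφ]
      have := Fin.insertNth_self_removeNth j (fun i => x i)
      rw [hxj] at this
      exact congrArg (WithLp.toLp 2) this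
  calc μH[(m:ℝ)] (cubeFace j ε) ≤ μH[(m:ℝ)] (φ '' (closedBall 0 (m + 1))) :=
        measure_mono hsub
    _ = μH[(m:ℝ)] (closedBall (0 : EuclideanSpace ℝ (Fin m)) (m + 1)) :=
        hiso.hausdorffMeasure_image (Or.inl hd) _
    _ < ⊤ := bounded_hausdorff_lt_top isBounded_closedBall

end Finiteness

lemma sphere_hausdorff_lt_top {N : ℕ} (hN : 1 ≤ N) :
    μH[(N : ℝ) - 1] (sphere (0 : EuclideanSpace ℝ (Fin N)) 1) < ⊤ := by
  obtain ⟨m, rfl⟩ : ∃ m, N = m + 1 := ⟨N - 1, by omega⟩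
  have hexp : ((m + 1 : ℕ) : ℝ) - 1 = (m : ℝ) := by push_cast; ring
  rw [hexp]
  have hd : (0:ℝ) ≤ m := Nat.cast_nonneg m
  set E := EuclideanSpace ℝ (Fin (m + 1))
  set S : Set E := (⋃ j : Fin (m + 1), (cubeFace j 1 ∪ cubeFace j (-1))) ∩ {x : E | 1 ≤ ‖x‖}
    with hS
  have hcover : sphere (0 : E) 1 ⊆ (fun x : E => ‖x‖⁻¹ • x) '' S := by
    intro x hx
    rw [mem_sphere_zero_iff_norm] at hx
    obtain ⟨j, -, hj⟩ := Finset.exists_max_image Finset.univ (fun i => |x i|)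
      ⟨⟨0, by omega⟩, Finset.mem_univ _⟩
    have hj' : ∀ i, |x i| ≤ |x j| := fun i => hj i (Finset.mem_univ i)
    have hpos : 0 < |x j| := by
      rcases lt_or_ge 0 (|x j|) with h | h
      · exact h
      · exfalso
        have hzero : ∀ i, x i = 0 := by
          intro i
          have := (hj' i).trans h
          have := abs_nonneg (x i)
          have : |x i| = 0 := le_antisymm ((hj' i).trans h) (abs_nonneg _)
          exact abs_eq_zero.mp this
        have : ‖x‖ = 0 := by
          rw [EuclideanSpace.norm_eq]
          have : ∀ i, ‖x i‖ ^ 2 = 0 := fun i => by rw [hzero i]; simp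
          rw [Finset.sum_congr rfl (fun i _ => this i), Finset.sum_const, smul_zero]
          exact Real.sqrt_zero
        rw [hx] at this; exact one_ne_zero this
    have hle1 : |x j| ≤ 1 := by
      have := coord_le_norm x j
      rwa [hx] at this
    set a := |x j| with ha
    set y : E := a⁻¹ • x with hy
    have hyi : ∀ i, y i = a⁻¹ * x i := fun i => rfl
    have hynorm : ‖y‖ = a⁻¹ := by
      rw [hy, norm_smul, hx, mul_one, Real.norm_eq_abs, abs_inv, abs_abs]
    have hymem : y ∈ S := by
      constructor
      · apply Set.mem_iUnion.mpr ⟨j, ?_⟩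
        rcases le_or_gt 0 (x j) with hsgn | hsgn
        · left
          refine ⟨?_, fun i => ?_⟩
          · have hxj0 : x j ≠ 0 := by
              intro h0; rw [ha, h0, abs_zero] at hpos; exact lt_irrefl 0 hpos
            rw [hyi j, ha, abs_of_nonneg hsgn, inv_mul_cancel₀ hxj0]
          · rw [hyi i, abs_mul, abs_inv, abs_abs]
            rw [inv_mul_le_one₀ hpos]; simpa using hj' i
        · right
          refine ⟨?_, fun i => ?_⟩
          · have hxj0 : x j ≠ 0 := ne_of_lt hsgn
            rw [hyi j, ha, abs_of_neg hsgn]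
            field_simp
          · rw [hyi i, abs_mul, abs_inv, abs_abs]
            rw [inv_mul_le_one₀ hpos]; simpa using hj' i
      · show (1:ℝ) ≤ ‖y‖
        rw [hynorm]
        exact (one_le_inv₀ hpos).mpr hle1
    refine ⟨y, hymem, ?_⟩
    show ‖y‖⁻¹ • y = x
    rw [hynorm, inv_inv, hy, smul_smul, mul_inv_cancel₀ hpos.ne', one_smul]
  have hSsub : S ⊆ {x : E | 1 ≤ ‖x‖} := Set.inter_subset_right
  have hlip := (proj_lipschitzOn (E := E)).mono hSsub
  have hSfin : μH[(m:ℝ)] S < ⊤ := by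
    have h1 : μH[(m:ℝ)] S ≤ ∑ j : Fin (m+1), (μH[(m:ℝ)] (cubeFace j 1) + μH[(m:ℝ)] (cubeFace j (-1))) := by
      refine (measure_mono Set.inter_subset_left).trans ((measure_iUnion_le _).trans ?_)
      rw [tsum_fintype]
      exact Finset.sum_le_sum fun j _ => measure_union_le _ _
    refine h1.trans_lt (ENNReal.sum_lt_top.mpr fun j _ => ?_)
    exact ENNReal.add_lt_top.mpr ⟨cubeFace_hausdorff_lt_top j 1, cubeFace_hausdorff_lt_top j (-1)⟩
  calc μH[(m:ℝ)] (sphere (0:E) 1) ≤ μH[(m:ℝ)] ((fun x : E => ‖x‖⁻¹ • x) '' S) :=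
        measure_mono hcover
    _ ≤ (2:ℝ≥0) ^ (m:ℝ) * μH[(m:ℝ)] S := hlip.hausdorffMeasure_image_le hd
    _ < ⊤ := ENNReal.mul_lt_top (ENNReal.rpow_lt_top_of_nonneg hd ENNReal.coe_ne_top) hSfin

section Scaling
open scoped Pointwise

variable {N : ℕ}

lemma sphere_integral_scale (hd : (0:ℝ) ≤ (N : ℝ) - 1)
    (x₀ : EuclideanSpace ℝ (Fin N)) {ρ : ℝ} (hρ : 0 < ρ)
    (g : EuclideanSpace ℝ (Fin N) → ℝ) :
    ∫ x in sphere x₀ ρ, g x ∂μH[(N : ℝ) - 1]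
      = ρ ^ ((N : ℝ) - 1) * ∫ ω in sphere (0 : EuclideanSpace ℝ (Fin N)) 1,
          g (x₀ + ρ • ω) ∂μH[(N : ℝ) - 1] := by
  set d := (N : ℝ) - 1 with hdd
  set Th : EuclideanSpace ℝ (Fin N) ≃ₜ EuclideanSpace ℝ (Fin N) := (Homeomorph.smulOfNeZero ρ hρ.ne').trans
    (Homeomorph.addLeft x₀) with hTh
  have hThapp : ∀ ω, Th ω = x₀ + ρ • ω := fun ω => rfl
  have hTmeas : Measurable (⇑Th) := Th.continuous.measurable
  have hTemb : MeasurableEmbedding (⇑Th) := Th.measurableEmbedding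
  have hρd_pos : (0:ℝ) < ρ ^ d := Real.rpow_pos_of_pos hρ d
  have key : ∀ A : Set (EuclideanSpace ℝ (Fin N)), μH[d] (⇑Th '' A) = ENNReal.ofReal (ρ ^ d) * μH[d] A := by
    intro A
    have h1 : ⇑Th '' A = (fun z : EuclideanSpace ℝ (Fin N) => x₀ + z) '' ((fun z : EuclideanSpace ℝ (Fin N) => ρ • z) '' A) := by
      rw [Set.image_image]; rfl
    have htrans : Isometry (fun z : EuclideanSpace ℝ (Fin N) => x₀ + z) :=
      Isometry.of_dist_eq fun a b => by simp [dist_eq_norm]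
    rw [h1, htrans.hausdorffMeasure_image (Or.inl hd) _]
    have h2 : (fun z : EuclideanSpace ℝ (Fin N) => ρ • z) '' A = ρ • A := rfl
    rw [h2, Measure.hausdorffMeasure_smul₀ hd hρ.ne' A]
    have h3 : ‖ρ‖₊ = ρ.toNNReal := by
      ext1; simp [Real.norm_of_nonneg hρ.le, Real.coe_toNNReal _ hρ.le]
    rw [h3, ENNReal.smul_def, smul_eq_mul]
    congr 1
    rw [← Real.toNNReal_rpow_of_nonneg hρ.le]
    rw [ENNReal.ofReal]
  have hmeq : μH[d] = (ENNReal.ofReal (ρ ^ d)) • Measure.map (⇑Th) μH[d] := by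
    ext s hs
    rw [Measure.smul_apply, Measure.map_apply hTmeas hs, smul_eq_mul, ← key,
      Set.image_preimage_eq s Th.surjective]
  have hpre : ⇑Th ⁻¹' (sphere x₀ ρ) = sphere (0 : EuclideanSpace ℝ (Fin N)) 1 := by
    ext ω
    simp only [Set.mem_preimage, hThapp, mem_sphere_iff_norm, add_sub_cancel_left,
      sub_zero, mem_sphere_zero_iff_norm, norm_smul, Real.norm_of_nonneg hρ.le]
    rw [mul_comm, mul_eq_right₀ hρ.ne']
  calc ∫ x in sphere x₀ ρ, g x ∂μH[d]
      = ∫ x in sphere x₀ ρ, g x ∂((ENNReal.ofReal (ρ ^ d)) • Measure.map (⇑Th) μH[d]) := by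
        rw [← hmeq]
    _ = (ENNReal.ofReal (ρ ^ d)).toReal •
          ∫ x in sphere x₀ ρ, g x ∂(Measure.map (⇑Th) μH[d]) := by
        rw [Measure.restrict_smul, integral_smul_measure]
    _ = ρ ^ d * ∫ ω in sphere (0 : EuclideanSpace ℝ (Fin N)) 1, g (x₀ + ρ • ω) ∂μH[d] := by
        rw [Measure.restrict_map hTmeas isClosed_sphere.measurableSet, hpre,
          hTemb.integral_map, ENNReal.toReal_ofReal hρd_pos.le, smul_eq_mul]
        rfl

end Scaling

set_option maxHeartbeats 2000000 in
/-- derivative of the averaged boundary quantity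
`H(r) = r^{1−N} ∫_{∂B_r(x₀)} ∑ c_i f_i² dσ`:
for `0 < r < dist(x₀, ∂Ω)` it is differentiable with
`H'(r) = (2/r^{N−1}) ∫_{∂B_r(x₀)} ∑ c_i f_i ∂_n f_i dσ`. -/
theorem stmt5 (N k : ℕ) (hN : 2 ≤ N) (Ω : Set (EuclideanSpace ℝ (Fin N))) (hΩ : IsOpen Ω)
    (c : Fin k → ℝ) (f : Fin k → EuclideanSpace ℝ (Fin N) → ℝ)
    (hf : ∀ i, ContDiffOn ℝ 1 (f i) Ω)
    (x₀ : EuclideanSpace ℝ (Fin N)) (hx₀ : x₀ ∈ Ω) :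
    ∀ r ∈ Set.Ioo 0 (Metric.infDist x₀ Ωᶜ),
      HasDerivAt (fun ρ : ℝ => ρ ^ ((1 : ℝ) - N) *
          ∫ x in Metric.sphere x₀ ρ, ∑ i, c i * (f i x) ^ 2 ∂μH[(N : ℝ) - 1])
        ((2 / r ^ (N - 1)) *
          ∫ x in Metric.sphere x₀ r, ∑ i, c i * f i x * radDeriv x₀ r (f i) x
            ∂μH[(N : ℝ) - 1]) r := by
  intro r hr
  obtain ⟨hr0, hrR⟩ := hr
  have hd : (0:ℝ) ≤ (N:ℝ) - 1 := by
    have : (2:ℝ) ≤ N := by exact_mod_cast hN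
    linarith
  set R := Metric.infDist x₀ Ωᶜ with hR
  set μ : Measure (EuclideanSpace ℝ (Fin N)) :=
    μH[(N:ℝ)-1].restrict (sphere (0 : EuclideanSpace ℝ (Fin N)) 1) with hμ
  haveI : IsFiniteMeasure μ := by
    constructor
    rw [hμ, Measure.restrict_apply_univ]
    exact sphere_hausdorff_lt_top (by omega)
  -- the closed ball of radius (r+R)/2 sits inside Ω
  have hball : closedBall x₀ ((r + R)/2) ⊆ Ω := by
    intro z hz
    by_contra hzΩ
    have h1 : R ≤ dist x₀ z := infDist_le_dist_of_mem hzΩ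
    rw [mem_closedBall, dist_comm] at hz
    linarith
  set ε : ℝ := min ((R - r)/2) (r/2) with hε
  have hε0 : 0 < ε := by
    apply lt_min <;> linarith
  have hρ_props : ∀ ρ ∈ ball r ε, 0 < ρ ∧ ρ ≤ (r + R)/2 := by
    intro ρ hρ
    rw [mem_ball, Real.dist_eq, abs_lt] at hρ
    have h1 : ε ≤ (R - r)/2 := min_le_left _ _
    have h2 : ε ≤ r/2 := min_le_right _ _
    constructor <;> linarith [hρ.1, hρ.2]
  have hmemK : ∀ ρ ∈ ball r ε, ∀ ω ∈ sphere (0 : EuclideanSpace ℝ (Fin N)) 1,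
      x₀ + ρ • ω ∈ closedBall x₀ ((r + R)/2) := by
    intro ρ hρ ω hω
    obtain ⟨hρ0, hρle⟩ := hρ_props ρ hρ
    rw [mem_sphere_zero_iff_norm] at hω
    rw [mem_closedBall, dist_eq_norm, add_sub_cancel_left, norm_smul,
      Real.norm_of_nonneg hρ0.le, hω, mul_one]
    exact hρle
  have hmemΩ : ∀ ρ ∈ ball r ε, ∀ ω ∈ sphere (0 : EuclideanSpace ℝ (Fin N)) 1,
      x₀ + ρ • ω ∈ Ω := fun ρ hρ ω hω => hball (hmemK ρ hρ ω hω)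
  -- uniform bounds on the compact set
  have hK : IsCompact (closedBall x₀ ((r + R)/2)) := isCompact_closedBall _ _
  have hfc : ∀ i, ContinuousOn (f i) (closedBall x₀ ((r + R)/2)) :=
    fun i => (hf i).continuousOn.mono hball
  have hfdc : ∀ i, ContinuousOn (fderiv ℝ (f i)) (closedBall x₀ ((r + R)/2)) :=
    fun i => ((hf i).continuousOn_fderiv_of_isOpen hΩ le_rfl).mono hball
  have hC : ∃ C : ℝ, ∀ i, ∀ p ∈ closedBall x₀ ((r + R)/2),
      |f i p| ≤ C ∧ ‖fderiv ℝ (f i) p‖ ≤ C := by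
    choose C₁ hC₁ using fun i => hK.exists_bound_of_continuousOn (hfc i)
    choose C₂ hC₂ using fun i => hK.exists_bound_of_continuousOn (hfdc i)
    refine ⟨∑ i, (|C₁ i| + |C₂ i|), fun i p hp => ⟨?_, ?_⟩⟩
    · calc |f i p| = ‖f i p‖ := (Real.norm_eq_abs _).symm
        _ ≤ C₁ i := hC₁ i p hp
        _ ≤ |C₁ i| + |C₂ i| := by
            have := le_abs_self (C₁ i); have := abs_nonneg (C₂ i); linarith
        _ ≤ ∑ i, (|C₁ i| + |C₂ i|) := Finset.single_le_sum
            (f := fun j => |C₁ j| + |C₂ j|) (fun j _ => by positivity) (Finset.mem_univ i)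
    · calc ‖fderiv ℝ (f i) p‖ ≤ C₂ i := hC₂ i p hp
        _ ≤ |C₁ i| + |C₂ i| := by
            have := le_abs_self (C₂ i); have := abs_nonneg (C₁ i); linarith
        _ ≤ ∑ i, (|C₁ i| + |C₂ i|) := Finset.single_le_sum
            (f := fun j => |C₁ j| + |C₂ j|) (fun j _ => by positivity) (Finset.mem_univ i)
  obtain ⟨C, hC⟩ := hC
  -- the parametrized families
  set F : ℝ → EuclideanSpace ℝ (Fin N) → ℝ :=
    fun ρ ω => ∑ i, c i * (f i (x₀ + ρ • ω)) ^ 2 with hF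
  set F' : ℝ → EuclideanSpace ℝ (Fin N) → ℝ :=
    fun ρ ω => ∑ i, c i * (2 * f i (x₀ + ρ • ω) *
      (fderiv ℝ (f i) (x₀ + ρ • ω)) ω) with hF'
  have hψcont : ∀ ρ : ℝ, Continuous (fun ω : EuclideanSpace ℝ (Fin N) => x₀ + ρ • ω) :=
    fun ρ => continuous_const.add (continuous_id.const_smul ρ)
  have hFcontOn : ∀ ρ ∈ ball r ε,
      ContinuousOn (F ρ) (sphere (0 : EuclideanSpace ℝ (Fin N)) 1) := by
    intro ρ hρ
    apply continuousOn_finset_sum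
    intro i _
    have hcomp : ContinuousOn (fun ω : EuclideanSpace ℝ (Fin N) => f i (x₀ + ρ • ω))
        (sphere 0 1) :=
      (hf i).continuousOn.comp (hψcont ρ).continuousOn (fun ω hω => hmemΩ ρ hρ ω hω)
    exact continuousOn_const.mul (hcomp.pow 2)
  have hF_meas : ∀ᶠ ρ in nhds r, AEStronglyMeasurable (F ρ) μ := by
    filter_upwards [ball_mem_nhds r hε0] with ρ hρ
    exact (hFcontOn ρ hρ).aestronglyMeasurable isClosed_sphere.measurableSet
  have hrball : r ∈ ball r ε := mem_ball_self hε0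
  have hF_int : Integrable (F r) μ := by
    obtain ⟨B₀, hB₀⟩ := (isCompact_sphere (0 : EuclideanSpace ℝ (Fin N)) 1)
      |>.exists_bound_of_continuousOn (hFcontOn r hrball)
    refine Integrable.mono' (integrable_const B₀)
      ((hFcontOn r hrball).aestronglyMeasurable isClosed_sphere.measurableSet) ?_
    filter_upwards [ae_restrict_mem isClosed_sphere.measurableSet] with ω hω
    exact hB₀ ω hω
  have hF'contOn : ContinuousOn (F' r) (sphere (0 : EuclideanSpace ℝ (Fin N)) 1) := by
    apply continuousOn_finset_sum
    intro i _
    have hmapsTo : ∀ ω ∈ sphere (0 : EuclideanSpace ℝ (Fin N)) 1,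
        x₀ + r • ω ∈ closedBall x₀ ((r + R)/2) := hmemK r hrball
    have hcomp : ContinuousOn (fun ω : EuclideanSpace ℝ (Fin N) => f i (x₀ + r • ω))
        (sphere 0 1) :=
      (hf i).continuousOn.comp (hψcont r).continuousOn (fun ω hω => hmemΩ r hrball ω hω)
    have hdcomp : ContinuousOn
        (fun ω : EuclideanSpace ℝ (Fin N) => fderiv ℝ (f i) (x₀ + r • ω)) (sphere 0 1) :=
      ((hf i).continuousOn_fderiv_of_isOpen hΩ le_rfl).comp (hψcont r).continuousOn
        (fun ω hω => hmemΩ r hrball ω hω)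
    exact continuousOn_const.mul
      ((continuousOn_const.mul hcomp).mul (hdcomp.clm_apply continuousOn_id))
  have hF'_meas : AEStronglyMeasurable (F' r) μ :=
    hF'contOn.aestronglyMeasurable isClosed_sphere.measurableSet
  set B : ℝ := ∑ i, |c i| * (2 * C * C) with hB
  have h_bound : ∀ᵐ ω ∂μ, ∀ ρ ∈ ball r ε, ‖F' ρ ω‖ ≤ B := by
    filter_upwards [ae_restrict_mem isClosed_sphere.measurableSet] with ω hω ρ hρ
    have hωn : ‖ω‖ = 1 := mem_sphere_zero_iff_norm.mp hω
    calc ‖F' ρ ω‖ ≤ ∑ i, ‖c i * (2 * f i (x₀ + ρ • ω) *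
          (fderiv ℝ (f i) (x₀ + ρ • ω)) ω)‖ := norm_sum_le _ _
      _ ≤ B := by
          apply Finset.sum_le_sum
          intro i _
          have hp := hmemK ρ hρ ω hω
          have h1 : |f i (x₀ + ρ • ω)| ≤ C := (hC i _ hp).1
          have h2 : |(fderiv ℝ (f i) (x₀ + ρ • ω)) ω| ≤ C := by
            calc |(fderiv ℝ (f i) (x₀ + ρ • ω)) ω|
                ≤ ‖fderiv ℝ (f i) (x₀ + ρ • ω)‖ * ‖ω‖ :=
                  (fderiv ℝ (f i) (x₀ + ρ • ω)).le_opNorm ω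
              _ = ‖fderiv ℝ (f i) (x₀ + ρ • ω)‖ := by rw [hωn, mul_one]
              _ ≤ C := (hC i _ hp).2
          have hCnn : 0 ≤ C := (abs_nonneg _).trans h1
          rw [Real.norm_eq_abs, abs_mul, abs_mul, abs_mul, abs_two]
          gcongr
  have h_diff : ∀ᵐ ω ∂μ, ∀ ρ ∈ ball r ε, HasDerivAt (fun ρ => F ρ ω) (F' ρ ω) ρ := by
    filter_upwards [ae_restrict_mem isClosed_sphere.measurableSet] with ω hω ρ hρ
    apply HasDerivAt.fun_sum
    intro i _
    have hp : x₀ + ρ • ω ∈ Ω := hmemΩ ρ hρ ω hω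
    have hdiff : DifferentiableAt ℝ (f i) (x₀ + ρ • ω) :=
      ((hf i).differentiableOn one_ne_zero).differentiableAt (hΩ.mem_nhds hp)
    have hline : HasDerivAt (fun ρ : ℝ => x₀ + ρ • ω) ω ρ := by
      simpa using ((hasDerivAt_id ρ).smul_const ω).const_add x₀
    have hcomp : HasDerivAt (fun ρ : ℝ => f i (x₀ + ρ • ω))
        ((fderiv ℝ (f i) (x₀ + ρ • ω)) ω) ρ :=
      hdiff.hasFDerivAt.comp_hasDerivAt ρ hline
    have := (hcomp.pow 2).const_mul (c i)
    simpa using this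
  have main := (hasDerivAt_integral_of_dominated_loc_of_deriv_le (ball_mem_nhds r hε0) hF_meas hF_int
    hF'_meas h_bound (integrable_const B) h_diff).2
  -- identify the function near r
  have hev : (fun ρ : ℝ => ρ ^ ((1 : ℝ) - N) *
      ∫ x in sphere x₀ ρ, ∑ i, c i * (f i x) ^ 2 ∂μH[(N : ℝ) - 1])
      =ᶠ[nhds r] (fun ρ => ∫ ω, F ρ ω ∂μ) := by
    filter_upwards [Ioi_mem_nhds hr0] with ρ hρ
    have hρ0 : (0:ℝ) < ρ := hρ
    rw [sphere_integral_scale hd x₀ hρ0 (fun x => ∑ i, c i * (f i x) ^ 2)]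
    rw [← mul_assoc, ← Real.rpow_add hρ0]
    have : (1:ℝ) - N + ((N:ℝ) - 1) = 0 := by ring
    rw [this, Real.rpow_zero, one_mul]
  -- identify the derivative value
  have hrpow : r ^ ((N:ℝ) - 1) = r ^ (N - 1 : ℕ) := by
    rw [← Real.rpow_natCast r (N - 1)]
    congr 1
    rw [Nat.cast_sub (by omega : 1 ≤ N), Nat.cast_one]
  have hval : (2 / r ^ (N - 1)) *
      ∫ x in sphere x₀ r, ∑ i, c i * f i x * radDeriv x₀ r (f i) x ∂μH[(N : ℝ) - 1]
      = ∫ ω, F' r ω ∂μ := by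
    rw [sphere_integral_scale hd x₀ hr0
      (fun x => ∑ i, c i * f i x * radDeriv x₀ r (f i) x), hrpow]
    have hrpow_ne : (r : ℝ) ^ (N - 1 : ℕ) ≠ 0 := pow_ne_zero _ hr0.ne'
    set I := ∫ ω in sphere (0 : EuclideanSpace ℝ (Fin N)) 1,
      (fun x => ∑ i, c i * f i x * radDeriv x₀ r (f i) x) (x₀ + r • ω) ∂μH[(N:ℝ)-1] with hI
    have h2 : (2:ℝ) / r ^ (N - 1 : ℕ) * (r ^ (N - 1 : ℕ) * I) = 2 * I := by
      field_simp
    rw [h2, hI]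
    rw [show (2:ℝ) = ((2:ℝ) : ℝ) from rfl]
    rw [← smul_eq_mul, ← integral_smul]
    apply integral_congr_ae
    filter_upwards with ω
    simp only [smul_eq_mul, hF']
    rw [Finset.mul_sum]
    apply Finset.sum_congr rfl
    intro i _
    have hrad : radDeriv x₀ r (f i) (x₀ + r • ω) = (fderiv ℝ (f i) (x₀ + r • ω)) ω := by
      rw [radDeriv, add_sub_cancel_left, gradient, real_inner_smul_right,
        InnerProductSpace.toDual_symm_apply, mul_div_cancel_left₀ _ hr0.ne']
    rw [hrad]
    ring
  rw [hval]
  exact main.congr_of_eventuallyEq hev
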